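/- Let g be a finite-dimensional Lie algebra over ℂ and (x, 𝔥, y) an sl₂-triple in g. Then: (i) g = range(ad y) ⊕ ker(ad x) and g = range(ad x) ⊕ ker(ad y) as direct sums of ℂ-vector spaces; (ii) ad y restricts to a linear isomorphism from range(ad x) onto range(ad y); consequently (iii) there exists a unique linear map P : g → g such that P vanishes on ker(ad x), range(P) ⊆ range(ad x), and (ad y) ∘ P equals the projection of g onto range(ad y) along ker(ad x). -/

import Mathlib

open Module LinearMap Set Module.End

attribute [local instance 100] LieRing.ofAssociativeRing

namespace Sl2Proof

variable {V : Type*} [AddCommGroup V] [Module ℂ V]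

noncomputable def prodSeq (X : Module.End ℂ V) (f : ℕ → ℂ) : ℕ → Module.End ℂ V
  | 0 => 1
  | j+1 => prodSeq X f j * (X - f j • 1)

lemma commute_prodSeq {X Y : Module.End ℂ V} (h : Commute Y X) (f : ℕ → ℂ) (j : ℕ) :
    Commute Y (prodSeq X f j) := by
  induction j with
  | zero => exact Commute.one_right Y
  | succ j ih =>
    exact ih.mul_right ((h.sub_right (Commute.smul_right (Commute.one_right Y) _)))

lemma prodSeq_succ_left (X : Module.End ℂ V) (f : ℕ → ℂ) (j : ℕ) :
    prodSeq X f (j+1) = (X - f 0 • 1) * prodSeq X (fun p => f (p+1)) j := by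
  induction j with
  | zero => simp [prodSeq]
  | succ j ih =>
    rw [prodSeq, ih, prodSeq, mul_assoc]

lemma prodSeq_mul_semiconj {S T F : Module.End ℂ V} (h : S * F = F * T) (f : ℕ → ℂ) (j : ℕ) :
    prodSeq S f j * F = F * prodSeq T f j := by
  induction j with
  | zero => simp [prodSeq]
  | succ j ih =>
    have : (S - f j • 1) * F = F * (T - f j • 1) := by
      rw [sub_mul, mul_sub, h, smul_mul_assoc, mul_smul_comm, one_mul, mul_one]
    rw [prodSeq, prodSeq, mul_assoc, this, ← mul_assoc, ih, mul_assoc]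

lemma prodSeq_apply_eq_smul {T : Module.End ℂ V} {u : V} (hu : T u = 0) (f : ℕ → ℂ) (j : ℕ) :
    prodSeq T f j u = (∏ p ∈ Finset.range j, (-(f p))) • u := by
  induction j with
  | zero => simp [prodSeq]
  | succ j ih =>
    rw [prodSeq, Module.End.mul_apply]
    have : (T - f j • 1) u = (-(f j)) • u := by
      simp [LinearMap.sub_apply, hu, neg_smul]
    rw [this, map_smul, ih, Finset.prod_range_succ, smul_smul, mul_comm]

lemma prodSeq_split {T S Hd : Module.End ℂ V} (hS : S = T - Hd) (hcomm : Commute Hd T)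
    (ν : ℂ) {f g : ℕ → ℂ} (hfg : ∀ p, f p = g p + ν) (j : ℕ) :
    ∃ C : Module.End ℂ V, Commute Hd C ∧ Commute T C ∧
      prodSeq T f j = prodSeq S g j + (Hd - ν • 1) * C := by
  have hHS : Commute Hd S := by rw [hS]; exact (hcomm.sub_right (Commute.refl Hd))
  have hTS : Commute T S := by rw [hS]; exact ((Commute.refl T).sub_right hcomm.symm)
  induction j with
  | zero => exact ⟨0, Commute.zero_right _, Commute.zero_right _, by simp [prodSeq]⟩
  | succ j ih =>
    obtain ⟨C, hHC, hTC, hsplit⟩ := ih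
    have hfact : T - f j • 1 = (S - g j • 1) + (Hd - ν • 1) := by
      rw [hS, hfg j, add_smul]
      abel
    have hN_PS : Commute (Hd - ν • 1) (prodSeq S g j) :=
      commute_prodSeq (hHS.sub_left (Commute.smul_left (Commute.one_left S) ν)) g j
    refine ⟨prodSeq S g j + C * ((S - g j • 1) + (Hd - ν • 1)), ?_, ?_, ?_⟩
    · exact (commute_prodSeq hHS g j).add_right
        (hHC.mul_right ((hHS.sub_right (Commute.smul_right (Commute.one_right Hd) _)).add_right
          ((Commute.refl Hd).sub_right (Commute.smul_right (Commute.one_right Hd) _))))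
    · exact (commute_prodSeq hTS g j).add_right
        (hTC.mul_right ((hTS.sub_right (Commute.smul_right (Commute.one_right T) _)).add_right
          (hcomm.symm.sub_right (Commute.smul_right (Commute.one_right T) _))))
    · rw [prodSeq, prodSeq, hsplit, hfact]
      simp only [mul_add, add_mul, mul_assoc]
      rw [← hN_PS.eq]
      abel


section Core

variable [FiniteDimensional ℂ V] {E F Hd : Module.End ℂ V}
  (hEF : E * F - F * E = Hd)
  (hHE : Hd * E - E * Hd = (2:ℂ) • E)
  (hHF : Hd * F - F * Hd = (-2:ℂ) • F)

include hEF hHE hHF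

lemma commute_Hd_T : Commute Hd (E * F) := by
  have h1 : Hd * E = E * Hd + (2:ℂ) • E := by rw [← hHE]; abel
  have h2 : Hd * F = F * Hd + (-2:ℂ) • F := by rw [← hHF]; abel
  show Hd * (E * F) = (E * F) * Hd
  rw [← mul_assoc, h1, add_mul, mul_assoc, h2, mul_add, smul_mul_assoc, mul_smul_comm,
    ← mul_assoc]
  module

omit [FiniteDimensional ℂ V] hEF hHF in
lemma semiconj_E (ν : ℂ) : E * (Hd - ν • 1) = (Hd - (ν + 2) • 1) * E := by
  rw [mul_sub, sub_mul, mul_smul_comm, smul_mul_assoc, mul_one, one_mul]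
  rw [show Hd * E = E * Hd + (2:ℂ) • E by rw [← hHE]; abel, add_smul]
  module

omit [FiniteDimensional ℂ V] hEF hHE in
lemma semiconj_F (ν : ℂ) : F * (Hd - ν • 1) = (Hd - (ν - 2) • 1) * F := by
  rw [mul_sub, sub_mul, mul_smul_comm, smul_mul_assoc, mul_one, one_mul]
  rw [show Hd * F = F * Hd + (-2:ℂ) • F by rw [← hHF]; abel, sub_smul]
  module

lemma mapsTo_E {ν : ℂ} {u : V} (hu : u ∈ Hd.maxGenEigenspace ν) :
    E u ∈ Hd.maxGenEigenspace (ν + 2) := by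
  obtain ⟨k, hk⟩ := (Module.End.mem_maxGenEigenspace _ _ _).mp hu
  refine (Module.End.mem_maxGenEigenspace _ _ _).mpr ⟨k, ?_⟩
  have hsc : SemiconjBy E (Hd - ν • 1) (Hd - (ν + 2) • 1) := semiconj_E hHE ν
  have : (Hd - (ν + 2) • 1) ^ k * E = E * (Hd - ν • 1) ^ k := (hsc.pow_right k).eq.symm
  calc ((Hd - (ν + 2) • 1) ^ k) (E u) = ((Hd - (ν + 2) • 1) ^ k * E) u := rfl
    _ = (E * (Hd - ν • 1) ^ k) u := by rw [this]
    _ = E (((Hd - ν • 1) ^ k) u) := rfl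
    _ = 0 := by rw [hk, map_zero]

lemma mapsTo_F {ν : ℂ} {u : V} (hu : u ∈ Hd.maxGenEigenspace ν) :
    F u ∈ Hd.maxGenEigenspace (ν - 2) := by
  obtain ⟨k, hk⟩ := (Module.End.mem_maxGenEigenspace _ _ _).mp hu
  refine (Module.End.mem_maxGenEigenspace _ _ _).mpr ⟨k, ?_⟩
  have hsc : SemiconjBy F (Hd - ν • 1) (Hd - (ν - 2) • 1) := semiconj_F hHF ν
  have : (Hd - (ν - 2) • 1) ^ k * F = F * (Hd - ν • 1) ^ k := (hsc.pow_right k).eq.symm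
  calc ((Hd - (ν - 2) • 1) ^ k) (F u) = ((Hd - (ν - 2) • 1) ^ k * F) u := rfl
    _ = (F * (Hd - ν • 1) ^ k) u := by rw [this]
    _ = F (((Hd - ν • 1) ^ k) u) := rfl
    _ = 0 := by rw [hk, map_zero]

omit hEF hHE hHF

lemma nil_of_mem {ν : ℂ} {u : V} (hu : u ∈ Hd.maxGenEigenspace ν) :
    ((Hd - ν • 1) ^ (finrank ℂ V)) u = 0 := by
  rw [Module.End.maxGenEigenspace_eq_genEigenspace_finrank, Module.End.mem_genEigenspace_nat,
    LinearMap.mem_ker] at hu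
  exact hu


omit hEF hHE hHF in
lemma FE_pow (i : ℕ) : (F * E) ^ (i + 1) = F * (E * F) ^ i * E := by
  induction i with
  | zero => simp
  | succ i ih =>
    rw [pow_succ, ih, pow_succ]
    simp only [mul_assoc]

include hEF hHE hHF in
lemma main_induction (k : ℕ) (ν : ℂ) (htop : Hd.maxGenEigenspace (ν + 2*(k+1)) = ⊥)
    {u : V} (hu : u ∈ Hd.maxGenEigenspace ν) :
    ((prodSeq (E*F) (fun p => ((p:ℂ)+1)*(ν+(p:ℂ))) (k+1)) ^ ((k+1) * finrank ℂ V)) u = 0 := by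
  have hcomm : Commute Hd (E*F) := commute_Hd_T hEF hHE hHF
  induction k generalizing ν u with
  | zero =>
    -- base case
    have hc0 : prodSeq (E*F) (fun p => ((p:ℂ)+1)*(ν+(p:ℂ))) 1 = (E*F) - ν • 1 := by
      show (1 : Module.End ℂ V) * _ = _
      rw [one_mul]
      norm_num
    rw [hc0, show (0+1) * finrank ℂ V = finrank ℂ V by omega]
    -- (T - ν•1) agrees with (Hd - ν•1) on maxGen ν
    have key : ∀ v ∈ Hd.maxGenEigenspace ν, ((E*F) - ν • 1) v = (Hd - ν • 1) v := by
      intro v hv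
      have hEv : E v = 0 := by
        have h2 := mapsTo_E hEF hHE hHF hv
        rw [show ν + 2*(((0:ℕ):ℂ)+1) = ν + 2 by norm_num] at htop
        rw [htop] at h2
        simpa using h2
      have hFEv : (F * E) v = 0 := by
        show F (E v) = 0
        rw [hEv, map_zero]
      have hHdv : Hd v = (E*F) v := by
        rw [← hEF, LinearMap.sub_apply, hFEv, sub_zero]
      simp [LinearMap.sub_apply, hHdv]
    have key2 : ∀ m : ℕ, (((E*F) - ν • 1) ^ m) u = ((Hd - ν • 1) ^ m) u := by
      intro m
      induction m with
      | zero => rfl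
      | succ m ihm =>
        have hmem : ((Hd - ν • 1) ^ m) u ∈ Hd.maxGenEigenspace ν := by
          have hcN : Commute Hd ((Hd - ν • 1) ^ m) :=
            (Commute.sub_right (Commute.refl Hd) (Commute.smul_right (Commute.one_right Hd) ν)).pow_right m
          exact Module.End.mapsTo_maxGenEigenspace_of_comm hcN ν hu
        calc (((E*F) - ν • 1) ^ (m+1)) u = (((E*F) - ν • 1)) ((((E*F) - ν • 1) ^ m) u) := by
              rw [pow_succ']; rfl
          _ = (((E*F) - ν • 1)) (((Hd - ν • 1) ^ m) u) := by rw [ihm]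
          _ = ((Hd - ν • 1)) (((Hd - ν • 1) ^ m) u) := key _ hmem
          _ = ((Hd - ν • 1) ^ (m+1)) u := by rw [pow_succ']; rfl
    rw [key2]
    exact nil_of_mem hu
  | succ k ih =>
    set D := finrank ℂ V with hD
    set T := E * F with hTdef
    set S := F * E with hSdef
    have hS : S = T - Hd := by rw [← hEF]; abel
    have hHS : Commute Hd S := by rw [hS]; exact hcomm.sub_right (Commute.refl Hd)
    have hTS : Commute T S := by rw [hS]; exact (Commute.refl T).sub_right hcomm.symm
    have hcd : ∀ p : ℕ, ((p:ℂ)+1)*(ν+(p:ℂ)) = (p:ℂ)*(ν+(p:ℂ)+1) + ν := by intro p; ring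
    obtain ⟨C, hHC, hTC, hsplit⟩ :=
      prodSeq_split hS hcomm ν (g := fun p => (p:ℂ)*(ν+(p:ℂ)+1)) hcd (k+2)
    set N := Hd - ν • (1 : Module.End ℂ V) with hNdef
    set A := prodSeq S (fun p => (p:ℂ)*(ν+(p:ℂ)+1)) (k+2) with hAdef
    have hNC : Commute N C := hHC.sub_left (Commute.smul_left (Commute.one_left C) ν)
    have hCS : Commute C S := by rw [hS]; exact (hTC.symm.sub_right hHC.symm)
    have hCA : Commute A C := (commute_prodSeq hCS _ _).symm
    have hNS : Commute N S := hHS.sub_left (Commute.smul_left (Commute.one_left S) ν)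
    have hNA : Commute N A := commute_prodSeq hNS _ _
    have hxy : Commute A (N * C) := (hNA.symm).mul_right hCA
    set M := (k+2) * D with hM
    -- rewrite the goal
    rw [show (k+1+1) = k+2 from rfl] at *
    rw [hsplit]
    rw [hxy.add_pow]
    rw [LinearMap.sum_apply]
    apply Finset.sum_eq_zero
    intro i hi
    rw [Finset.mem_range] at hi
    by_cases hcase : D ≤ M - i
    · -- nilpotent part kills
      have hNCpow : (N * C) ^ (M - i) = C ^ (M - i) * N ^ (M - i) := by
        rw [hNC.eq, hNC.symm.mul_pow]
      have hNpow : (N ^ (M - i)) (((M.choose i : Module.End ℂ V)) u) = 0 := by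
        rw [Module.End.natCast_apply]
        rw [show M - i = (M - i - D) + D by omega, pow_add]
        show (N ^ (M - i - D)) ((N ^ D) ((M.choose i) • u)) = 0
        rw [map_nsmul]
        have : (N ^ D) u = 0 := nil_of_mem hu
        rw [this]
        simp
      calc (A ^ i * (N * C) ^ (M - i) * (M.choose i : Module.End ℂ V)) u
          = (A ^ i) (((N * C) ^ (M - i)) ((M.choose i : Module.End ℂ V) u)) := rfl
        _ = 0 := by
            rw [hNCpow]
            show (A ^ i) ((C ^ (M - i)) ((N ^ (M - i)) (((M.choose i : Module.End ℂ V)) u))) = 0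
            rw [hNpow, map_zero, map_zero]
    · -- main part kills, via inductive hypothesis
      have hM' : M = (k+1) * D + D := by rw [hM]; ring
      have hiLarge : (k+1) * D + 1 ≤ i := by omega
      have hApow : (A ^ i) u = 0 := by
        -- A = S * W
        have hd0 : A = S * prodSeq S (fun p => ((p:ℂ)+1)*((ν+2)+(p:ℂ))) (k+1) := by
          rw [hAdef, prodSeq_succ_left]
          congr 1
          · norm_num
          · congr 1
            funext p
            push_cast
            ring
        set W := prodSeq S (fun p => ((p:ℂ)+1)*((ν+2)+(p:ℂ))) (k+1) with hWdef
        set WT := prodSeq T (fun p => ((p:ℂ)+1)*((ν+2)+(p:ℂ))) (k+1) with hWTdef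
        have hSW : Commute S W := commute_prodSeq (Commute.refl S) _ _
        have hWF : W * F = F * WT := prodSeq_mul_semiconj (by rw [hSdef, hTdef, mul_assoc]) _ _
        have hWFsc : SemiconjBy F WT W := hWF.symm
        obtain ⟨i', rfl⟩ : ∃ i', i = i' + 1 := ⟨i - 1, by omega⟩
        have hAi : A ^ (i' + 1) = W ^ (i' + 1) * (F * T ^ i' * E) := by
          rw [hd0, hSW.mul_pow, hSW.pow_pow, hSdef]
          rw [FE_pow]
        rw [hAi]
        have hz : (T ^ i') (E u) ∈ Hd.maxGenEigenspace (ν + 2) := by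
          have h1 : E u ∈ Hd.maxGenEigenspace (ν + 2) := mapsTo_E hEF hHE hHF hu
          exact Module.End.mapsTo_maxGenEigenspace_of_comm (hcomm.pow_right i') (ν+2) h1
        have hWT0 : (WT ^ ((k+1) * D)) ((T ^ i') (E u)) = 0 := by
          have htop' : Hd.maxGenEigenspace ((ν + 2) + 2*(k+1)) = ⊥ := by
            rw [show (ν + 2) + 2*(k+1) = ν + 2*((k:ℂ)+2) by push_cast; ring]
            rw [show (ν + 2*((k+1:ℕ)+1) : ℂ) = ν + 2*((k:ℂ)+2) by push_cast; ring] at htop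
            exact htop
          exact ih (ν + 2) htop' hz
        calc (W ^ (i'+1) * (F * T ^ i' * E)) u
            = (W ^ (i'+1) * F) ((T ^ i') (E u)) := rfl
          _ = (F * WT ^ (i'+1)) ((T ^ i') (E u)) := by rw [(hWFsc.pow_right (i'+1)).eq]
          _ = F ((WT ^ (i'+1)) ((T ^ i') (E u))) := rfl
          _ = 0 := by
              rw [show i' + 1 = (i' + 1 - (k+1)*D) + (k+1)*D by omega, pow_add]
              show F ((WT ^ (i' + 1 - (k+1)*D)) ((WT ^ ((k+1)*D)) ((T ^ i') (E u)))) = 0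
              rw [hWT0, map_zero, map_zero]
      have hreorder : A ^ i * (N * C) ^ (M - i) * (M.choose i : Module.End ℂ V)
          = (N * C) ^ (M - i) * (M.choose i : Module.End ℂ V) * A ^ i := by
        rw [(hxy.pow_pow i (M - i)).eq]
        rw [mul_assoc, mul_assoc]
        congr 1
        exact (Nat.commute_cast (A ^ i) (M.choose i)).eq
      rw [hreorder]
      show ((N * C) ^ (M - i)) (((M.choose i : Module.End ℂ V)) ((A ^ i) u)) = 0
      rw [hApow, map_zero, map_zero]


include hEF hHE hHF in
lemma key_injective (ν : ℂ) (hν : ∀ p : ℕ, ν + (p:ℂ) ≠ 0) {u : V}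
    (hu : u ∈ Hd.maxGenEigenspace ν) (hTu : (E * F) u = 0) : u = 0 := by
  obtain ⟨k, hk⟩ : ∃ k : ℕ, Hd.maxGenEigenspace (ν + 2*((k:ℂ)+1)) = ⊥ := by
    by_contra hcon
    push_neg at hcon
    have hinj : Function.Injective fun k : ℕ => ν + 2*((k:ℂ)+1) := by
      intro a b hab
      simp only [add_right_inj, mul_eq_mul_left_iff] at hab
      rcases hab with h | h
      · exact Nat.cast_injective (add_right_cancel h)
      · norm_num at h
    have hsub : Set.range (fun k : ℕ => ν + 2*((k:ℂ)+1)) ⊆ Hd.HasEigenvalue := by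
      rintro _ ⟨k, rfl⟩
      have hne := hcon k
      rw [Module.End.maxGenEigenspace_eq_genEigenspace_finrank] at hne
      exact Module.End.hasEigenvalue_of_hasGenEigenvalue
        (Module.End.hasGenEigenvalue_iff.mpr hne)
    exact Set.infinite_range_of_injective hinj ((Module.End.finite_hasEigenvalue Hd).subset hsub)
  have hmain := main_induction hEF hHE hHF k ν hk hu
  set B := prodSeq (E*F) (fun p => ((p:ℂ)+1)*(ν+(p:ℂ))) (k+1) with hB
  set a : ℂ := ∏ p ∈ Finset.range (k+1), (-(((p:ℂ)+1)*(ν+(p:ℂ)))) with ha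
  have hBu : B u = a • u := prodSeq_apply_eq_smul hTu _ _
  have hpow : ∀ m : ℕ, (B ^ m) u = a ^ m • u := by
    intro m
    induction m with
    | zero => simp
    | succ m ihm =>
      rw [pow_succ']
      show B ((B ^ m) u) = _
      rw [ihm, map_smul, hBu, smul_smul, pow_succ, mul_comm]
  rw [hpow] at hmain
  have hane : a ≠ 0 := by
    rw [ha]
    apply Finset.prod_ne_zero_iff.mpr
    intro p _
    apply neg_ne_zero.mpr
    apply mul_ne_zero
    · intro hzero
      have : ((p:ℂ)+1) = (((p+1:ℕ)):ℂ) := by push_cast; ring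
      rw [this] at hzero
      exact Nat.cast_ne_zero.mpr (Nat.succ_ne_zero p) hzero
    · exact hν p
  have := pow_ne_zero ((k+1) * finrank ℂ V) hane
  exact (smul_eq_zero.mp hmain).resolve_left this

end Core

section LieCore

variable {g : Type*} [LieRing g] [LieAlgebra ℂ g] [FiniteDimensional ℂ g]

lemma core (x H y : g)
    (hHx : ⁅H, x⁆ = (2 : ℂ) • x) (hHy : ⁅H, y⁆ = (-2 : ℂ) • y) (hxy : ⁅x, y⁆ = H) :
    LinearMap.ker (LieAlgebra.ad ℂ g x) ⊓ LinearMap.range (LieAlgebra.ad ℂ g y) = ⊥ := by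
  by_cases hH : H = 0
  · have hy : y = 0 := by
      have h0 : (0:g) = (-2:ℂ) • y := by rw [← hHy, hH, zero_lie]
      have := h0.symm
      rcases smul_eq_zero.mp this.symm.symm with h | h
      · norm_num at h
      · exact h
    rw [hy]
    simp
  · set E := LieAlgebra.ad ℂ g x with hE
    set F := LieAlgebra.ad ℂ g y with hF
    set Hd := LieAlgebra.ad ℂ g H with hHd
    have hEF : E * F - F * E = Hd := by
      rw [hE, hF, hHd, ← hxy, LieHom.map_lie]
      rfl
    have hHE : Hd * E - E * Hd = (2:ℂ) • E := by
      rw [hHd, hE, show (2:ℂ) • LieAlgebra.ad ℂ g x = LieAlgebra.ad ℂ g ((2:ℂ) • x) by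
        rw [map_smul], ← hHx, LieHom.map_lie]
      rfl
    have hHF : Hd * F - F * Hd = (-2:ℂ) • F := by
      rw [hHd, hF, show (-2:ℂ) • LieAlgebra.ad ℂ g y = LieAlgebra.ad ℂ g ((-2:ℂ) • y) by
        rw [map_smul], ← hHy, LieHom.map_lie]
      rfl
    by_contra hKne
    set K := LinearMap.ker E ⊓ LinearMap.range F with hK
    have hKinv : ∀ u ∈ K, Hd u ∈ K := by
      rintro u ⟨hu1, hu2⟩
      constructor
      · have hxu : ⁅x, u⁆ = 0 := hu1
        show ⁅x, ⁅H, u⁆⁆ = 0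
        rw [leibniz_lie x H u, hxu, lie_zero, add_zero]
        have h1 : ⁅x, H⁆ = -⁅H, x⁆ := (lie_skew x H).symm
        rw [h1, hHx, neg_lie, smul_lie, hxu, smul_zero, neg_zero]
      · obtain ⟨v, hv⟩ := hu2
        refine ⟨(-2:ℂ) • v + ⁅H, v⁆, ?_⟩
        show ⁅y, (-2:ℂ) • v + ⁅H, v⁆⁆ = ⁅H, u⁆
        rw [← hv]
        show ⁅y, (-2:ℂ) • v + ⁅H, v⁆⁆ = ⁅H, ⁅y, v⁆⁆
        rw [leibniz_lie H y v, hHy, lie_add, lie_smul, smul_lie]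
    have : Nontrivial K := Submodule.nontrivial_iff_ne_bot.mpr hKne
    obtain ⟨μ, hμ⟩ := Module.End.exists_eigenvalue (LinearMap.restrict Hd hKinv)
    obtain ⟨v, hv⟩ := hμ.exists_hasEigenvector
    set w : g := (v : g) with hw
    have hw0 : w ≠ 0 := fun h => hv.2 (ZeroMemClass.coe_eq_zero.mp h)
    have hHw : ⁅H, w⁆ = μ • w := by
      have h1 := hv.apply_eq_smul
      have h2 : ((LinearMap.restrict Hd hKinv) v : g) = Hd w := LinearMap.restrict_coe_apply _ _ _
      calc ⁅H, w⁆ = Hd w := rfl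
        _ = ((LinearMap.restrict Hd hKinv) v : g) := h2.symm
        _ = ((μ • v : K) : g) := by rw [h1]
        _ = μ • w := rfl
    have hwK : w ∈ K := v.2
    have hEw : ⁅x, w⁆ = 0 := hwK.1
    obtain ⟨v0, hv0⟩ := hwK.2
    have t : IsSl2Triple H x y :=
      { h_ne_zero := hH
        lie_e_f := hxy
        lie_h_e_nsmul := by rw [hHx, ← Nat.cast_smul_eq_nsmul ℂ 2 x]; norm_num
        lie_h_f_nsmul := by
          rw [hHy, ← Nat.cast_smul_eq_nsmul ℂ 2 y, ← neg_smul]; norm_num }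
    have prim : t.HasPrimitiveVectorWith w μ := ⟨hw0, hHw, hEw⟩
    obtain ⟨n, hn⟩ := prim.exists_nat
    set n2 : ℂ := (n:ℂ) + 2 with hn2
    -- decompose v0 over generalized eigenspaces of Hd
    have htot : v0 ∈ ⨆ ν : ℂ, Hd.maxGenEigenspace ν := by
      rw [Module.End.iSup_maxGenEigenspace_eq_top]
      trivial
    rw [Submodule.mem_iSup_iff_exists_finsupp] at htot
    obtain ⟨c0, hc0, hsum⟩ := htot
    set u₁ : g := c0 n2 with hu₁
    have hws : w = ∑ ν ∈ c0.support, F (c0 ν) := by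
      rw [← hv0, ← hsum, Finsupp.sum, map_sum]
    have hr_eq : w - F u₁ = ∑ ν ∈ c0.support.erase n2, F (c0 ν) := by
      by_cases hmem : n2 ∈ c0.support
      · rw [hws, ← Finset.sum_erase_add _ _ hmem]
        abel
      · have : u₁ = 0 := Finsupp.notMem_support_iff.mp hmem
        rw [this, map_zero, sub_zero, hws, Finset.erase_eq_of_notMem hmem]
    have hwn : w ∈ Hd.maxGenEigenspace (n:ℂ) := by
      rw [Module.End.mem_maxGenEigenspace]
      refine ⟨1, ?_⟩
      rw [pow_one, LinearMap.sub_apply, LinearMap.smul_apply, Module.End.one_apply]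
      have : Hd w = μ • w := hHw
      rw [this, hn]
      simp
    have hFu₁ : F u₁ ∈ Hd.maxGenEigenspace (n:ℂ) := by
      have h1 := mapsTo_F hEF hHE hHF (hc0 n2)
      rwa [show n2 - 2 = (n:ℂ) by rw [hn2]; ring] at h1
    have hr1 : w - F u₁ ∈ Hd.maxGenEigenspace (n:ℂ) := sub_mem hwn hFu₁
    have hr2 : w - F u₁ ∈ ⨆ (ν : ℂ) (_ : ν ≠ (n:ℂ)), Hd.maxGenEigenspace ν := by
      rw [hr_eq]
      apply Submodule.sum_mem
      intro ν hν
      have hne : ν - 2 ≠ (n:ℂ) := by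
        intro hcon
        apply Finset.ne_of_mem_erase hν
        rw [hn2, ← hcon]
        ring
      have h1 : F (c0 ν) ∈ Hd.maxGenEigenspace (ν - 2) := mapsTo_F hEF hHE hHF (hc0 ν)
      exact le_biSup (fun ν => Hd.maxGenEigenspace ν) hne h1
    have hindep := Module.End.independent_maxGenEigenspace Hd
    have hzero : w - F u₁ = 0 := by
      have hdisj := hindep (n:ℂ)
      exact (Submodule.disjoint_def.mp hdisj) _ hr1 hr2
    have hwFu : w = F u₁ := by rw [sub_eq_zero] at hzero; exact hzero
    have hTu₁ : (E * F) u₁ = 0 := by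
      show E (F u₁) = 0
      rw [← hwFu]
      exact hEw
    have hνne : ∀ p : ℕ, n2 + (p:ℂ) ≠ 0 := by
      intro p
      rw [hn2, show (n:ℂ) + 2 + (p:ℂ) = ((n + 2 + p : ℕ) : ℂ) by push_cast; ring]
      exact Nat.cast_ne_zero.mpr (by omega)
    have : u₁ = 0 := key_injective hEF hHE hHF n2 hνne (hc0 n2) hTu₁
    rw [this, map_zero] at hwFu
    exact hw0 hwFu


lemma core_all (x H y : g)
    (hHx : ⁅H, x⁆ = (2 : ℂ) • x) (hHy : ⁅H, y⁆ = (-2 : ℂ) • y) (hxy : ⁅x, y⁆ = H) :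
    LinearMap.ker (LieAlgebra.ad ℂ g x) ⊓ LinearMap.range (LieAlgebra.ad ℂ g y) = ⊥ ∧
    LinearMap.ker (LieAlgebra.ad ℂ g y) ⊓ LinearMap.range (LieAlgebra.ad ℂ g x) = ⊥ := by
  refine ⟨core x H y hHx hHy hxy, core y (-H) x ?_ ?_ ?_⟩
  · rw [neg_lie, hHy]; module
  · rw [neg_lie, hHx]; module
  · rw [← hxy]; exact (lie_skew y x).symm

lemma finrank_ker_eq (x H y : g)
    (hHx : ⁅H, x⁆ = (2 : ℂ) • x) (hHy : ⁅H, y⁆ = (-2 : ℂ) • y) (hxy : ⁅x, y⁆ = H) :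
    finrank ℂ (LinearMap.ker (LieAlgebra.ad ℂ g x)) =
      finrank ℂ (LinearMap.ker (LieAlgebra.ad ℂ g y)) := by
  obtain ⟨h1, h2⟩ := core_all x H y hHx hHy hxy
  set E := LieAlgebra.ad ℂ g x
  set F := LieAlgebra.ad ℂ g y
  have key : ∀ (A B : Module.End ℂ g), LinearMap.ker A ⊓ LinearMap.range B = ⊥ →
      finrank ℂ (LinearMap.ker A) ≤ finrank ℂ (LinearMap.ker B) := by
    intro A B hAB
    have hrn := LinearMap.finrank_range_add_finrank_ker B
    have hsup := Submodule.finrank_sup_add_finrank_inf_eq (LinearMap.ker A) (LinearMap.range B)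
    rw [hAB] at hsup
    simp only [finrank_bot, add_zero] at hsup
    have hle : finrank ℂ ↥(LinearMap.ker A ⊔ LinearMap.range B) ≤ finrank ℂ g :=
      Submodule.finrank_le _
    omega
  exact le_antisymm (key E F h1) (key F E h2)

theorem sl2_final
    (x H y : g)
    (hHx : ⁅H, x⁆ = (2 : ℂ) • x) (hHy : ⁅H, y⁆ = (-2 : ℂ) • y) (hxy : ⁅x, y⁆ = H) :
    IsCompl (LinearMap.range (LieAlgebra.ad ℂ g y)) (LinearMap.ker (LieAlgebra.ad ℂ g x)) ∧
    IsCompl (LinearMap.range (LieAlgebra.ad ℂ g x)) (LinearMap.ker (LieAlgebra.ad ℂ g y)) ∧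
    Set.BijOn (fun u => ⁅y, u⁆)
      ((LinearMap.range (LieAlgebra.ad ℂ g x) : Submodule ℂ g) : Set g)
      ((LinearMap.range (LieAlgebra.ad ℂ g y) : Submodule ℂ g) : Set g) ∧
    (∃! P : g →ₗ[ℂ] g,
      (∀ u : g, ⁅x, u⁆ = 0 → P u = 0) ∧
      LinearMap.range P ≤ LinearMap.range (LieAlgebra.ad ℂ g x) ∧
      ∀ u : g, ⁅x, u - ⁅y, P u⁆⁆ = 0) := by
  obtain ⟨h1, h2⟩ := core_all x H y hHx hHy hxy
  have hkk := finrank_ker_eq x H y hHx hHy hxy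
  set E := LieAlgebra.ad ℂ g x with hE
  set F := LieAlgebra.ad ℂ g y with hF
  have hrnE := LinearMap.finrank_range_add_finrank_ker E
  have hrnF := LinearMap.finrank_range_add_finrank_ker F
  -- IsCompl 1 : range F and ker E
  have hcompl1 : IsCompl (LinearMap.range F) (LinearMap.ker E) := by
    constructor
    · rw [disjoint_iff, inf_comm]; exact h1
    · rw [codisjoint_iff]
      apply Submodule.eq_top_of_finrank_eq
      have hsup := Submodule.finrank_sup_add_finrank_inf_eq (LinearMap.range F) (LinearMap.ker E)
      rw [inf_comm, h1] at hsup
      simp only [finrank_bot, add_zero] at hsup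
      omega
  have hcompl2 : IsCompl (LinearMap.range E) (LinearMap.ker F) := by
    constructor
    · rw [disjoint_iff, inf_comm]; exact h2
    · rw [codisjoint_iff]
      apply Submodule.eq_top_of_finrank_eq
      have hsup := Submodule.finrank_sup_add_finrank_inf_eq (LinearMap.range E) (LinearMap.ker F)
      rw [inf_comm, h2] at hsup
      simp only [finrank_bot, add_zero] at hsup
      omega
  -- the key G map
  set G : (LinearMap.range E : Submodule ℂ g) →ₗ[ℂ] g := F ∘ₗ (LinearMap.range E).subtype with hG
  have hGker : LinearMap.ker G = ⊥ := by
    rw [LinearMap.ker_eq_bot']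
    intro m hm
    have hm1 : (m : g) ∈ LinearMap.ker F ⊓ LinearMap.range E :=
      Submodule.mem_inf.mpr ⟨LinearMap.mem_ker.mpr (show F (m : g) = 0 from hm), m.2⟩
    rw [h2] at hm1
    exact Subtype.ext hm1
  have hGrange : LinearMap.range G = LinearMap.range F := by
    apply Submodule.eq_of_le_of_finrank_le
    · rintro _ ⟨u, rfl⟩
      exact ⟨(u : g), rfl⟩
    · have hrnG := LinearMap.finrank_range_add_finrank_ker G
      rw [hGker] at hrnG
      simp only [finrank_bot, add_zero] at hrnG
      omega
  -- BijOn
  have hbij : Set.BijOn (fun u => ⁅y, u⁆)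
      ((LinearMap.range E : Submodule ℂ g) : Set g)
      ((LinearMap.range F : Submodule ℂ g) : Set g) := by
    refine ⟨?_, ?_, ?_⟩
    · intro u hu
      exact ⟨u, by simp [hF]⟩
    · intro u hu v hv huv
      have hsub : u - v ∈ LinearMap.ker F ⊓ LinearMap.range E := by
        refine Submodule.mem_inf.mpr ⟨?_, sub_mem (SetLike.mem_coe.mp hu) (SetLike.mem_coe.mp hv)⟩
        rw [LinearMap.mem_ker, map_sub]
        have h' : F u = F v := by simp only [hF, LieAlgebra.ad_apply]; exact huv
        rw [h', sub_self]
      rw [h2] at hsub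
      exact sub_eq_zero.mp hsub
    · intro w hw
      have hw' : w ∈ LinearMap.range G := by rw [hGrange]; exact hw
      obtain ⟨m, hm⟩ := hw'
      refine ⟨(m : g), m.2, ?_⟩
      show ⁅y, (m : g)⁆ = w
      rw [← hm]
      simp [hG, hF, LieAlgebra.ad_apply]
  refine ⟨hcompl1, hcompl2, hbij, ?_⟩
  -- the projection P
  set π := Submodule.linearProjOfIsCompl (LinearMap.range F) (LinearMap.ker E) hcompl1 with hπ
  set G' : (LinearMap.range E : Submodule ℂ g) →ₗ[ℂ] (LinearMap.range F : Submodule ℂ g) :=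
    LinearMap.codRestrict (LinearMap.range F) G
      (fun c => by rw [← hGrange]; exact LinearMap.mem_range_self G c) with hG'
  have hG'bij : Function.Bijective G' := by
    constructor
    · intro a b hab
      have : G a = G b := by
        have := congrArg (Subtype.val) hab
        simpa [hG'] using this
      have h0 : a - b ∈ LinearMap.ker G := by rw [LinearMap.mem_ker, map_sub, this, sub_self]
      rw [hGker] at h0
      have := (Submodule.mem_bot ℂ).mp h0
      rwa [sub_eq_zero] at this
    · intro w
      have hw' : (w : g) ∈ LinearMap.range G := by rw [hGrange]; exact w.2
      obtain ⟨m, hm⟩ := hw'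
      exact ⟨m, Subtype.ext (by simpa [hG'] using hm)⟩
  set e := LinearEquiv.ofBijective G' hG'bij with he
  set P : g →ₗ[ℂ] g := (LinearMap.range E).subtype ∘ₗ (e.symm : (LinearMap.range F : Submodule ℂ g) →ₗ[ℂ] (LinearMap.range E : Submodule ℂ g)) ∘ₗ π with hP
  have hFP : ∀ u : g, F (P u) = ((π u : g)) := by
    intro u
    have h1' : F (P u) = ((G' (e.symm (π u)) : (LinearMap.range F : Submodule ℂ g)) : g) := rfl
    rw [h1']
    have h2' : G' (e.symm (π u)) = e (e.symm (π u)) := rfl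
    rw [h2', e.apply_symm_apply]
  refine ⟨P, ⟨?_, ?_, ?_⟩, ?_⟩
  · intro u hu
    have hu' : u ∈ LinearMap.ker E := by rwa [LinearMap.mem_ker, hE, LieAlgebra.ad_apply]
    have : π u = 0 := Submodule.projectionOnto_apply_of_mem_right hcompl1 hu'
    rw [hP]
    simp [this]
  · rintro _ ⟨u, rfl⟩
    rw [hP]
    exact ((e.symm (π u)) : (LinearMap.range E : Submodule ℂ g)).2
  · intro u
    have hker : u - F (P u) ∈ LinearMap.ker E := by
      rw [hFP]
      have hself := Submodule.projection_add_projection_eq_self hcompl1 u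
      have heq : u - ((π u : g)) = (((LinearMap.ker E).linearProjOfIsCompl _ hcompl1.symm u : g)) := by
        rw [sub_eq_iff_eq_add']; exact hself.symm
      rw [heq]
      exact Submodule.coe_mem _
    have h0 := LinearMap.mem_ker.mp hker
    rw [show ⁅y, P u⁆ = F (P u) by simp only [hF, LieAlgebra.ad_apply]]
    simp only [hE, LieAlgebra.ad_apply] at h0
    exact h0
  · intro Q hQ
    obtain ⟨hQ1, hQ2, hQ3⟩ := hQ
    ext u
    have hkerdiff : F (Q u) - F (P u) ∈ LinearMap.ker E := by
      have hA : E (u - F (Q u)) = 0 := by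
        have h3 := hQ3 u
        simp only [hE, LieAlgebra.ad_apply]
        rw [show F (Q u) = ⁅y, Q u⁆ by simp only [hF, LieAlgebra.ad_apply]]
        exact h3
      have hB : E (u - F (P u)) = 0 := by
        have h3 : u - F (P u) ∈ LinearMap.ker E := by
          rw [hFP]
          have hself := Submodule.projection_add_projection_eq_self hcompl1 u
          have : u - ((π u : g)) = (((LinearMap.ker E).linearProjOfIsCompl _ hcompl1.symm u : g)) := by
            rw [sub_eq_iff_eq_add']; exact hself.symm
          rw [this]
          exact Submodule.coe_mem _
        exact LinearMap.mem_ker.mp h3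
      rw [LinearMap.mem_ker]
      have : F (Q u) - F (P u) = (u - F (P u)) - (u - F (Q u)) := by abel
      rw [this, map_sub, hA, hB, sub_zero]
    have hrangediff : F (Q u) - F (P u) ∈ LinearMap.range F := by
      rw [← map_sub]
      exact LinearMap.mem_range_self F _
    have hFdiff0 : F (Q u) - F (P u) = 0 := by
      have : F (Q u) - F (P u) ∈ LinearMap.ker E ⊓ LinearMap.range F := ⟨hkerdiff, hrangediff⟩
      rw [h1] at this
      exact this
    have hdiff : Q u - P u ∈ LinearMap.ker F ⊓ LinearMap.range E := by
      refine Submodule.mem_inf.mpr ⟨?_, ?_⟩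
      · rw [LinearMap.mem_ker, map_sub, sub_eq_zero]
        rwa [sub_eq_zero] at hFdiff0
      · apply sub_mem
        · exact hQ2 (LinearMap.mem_range_self Q u)
        · exact ((e.symm (π u)) : (LinearMap.range E : Submodule ℂ g)).2
    rw [h2] at hdiff
    exact sub_eq_zero.mp hdiff

end LieCore

end Sl2Proof


/-- Let `g` be a finite-dimensional Lie algebra over `ℂ` and `(x, H, y)`
an `sl₂`-triple in `g`. Then: (i) `g = range (ad y) ⊕ ker (ad x)` and
`g = range (ad x) ⊕ ker (ad y)` as `ℂ`-vector spaces; (ii) `ad y` restricts to a linear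
bijection from `range (ad x)` onto `range (ad y)`; and (iii) there is a unique linear map
`P : g → g` vanishing on `ker (ad x)`, with range contained in `range (ad x)`, such that
`(ad y) ∘ P` is the projection of `g` onto `range (ad y)` along `ker (ad x)`
(i.e. `u - ⁅y, P u⁆ ∈ ker (ad x)` for every `u`, while `⁅y, P u⁆ ∈ range (ad y)`). -/
theorem sl2_decomposition_and_canonical_splitting
    {g : Type*} [LieRing g] [LieAlgebra ℂ g] [FiniteDimensional ℂ g]
    (x H y : g)
    (hHx : ⁅H, x⁆ = (2 : ℂ) • x) (hHy : ⁅H, y⁆ = (-2 : ℂ) • y) (hxy : ⁅x, y⁆ = H) :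
    IsCompl (LinearMap.range (LieAlgebra.ad ℂ g y)) (LinearMap.ker (LieAlgebra.ad ℂ g x)) ∧
    IsCompl (LinearMap.range (LieAlgebra.ad ℂ g x)) (LinearMap.ker (LieAlgebra.ad ℂ g y)) ∧
    Set.BijOn (fun u => ⁅y, u⁆)
      ((LinearMap.range (LieAlgebra.ad ℂ g x) : Submodule ℂ g) : Set g)
      ((LinearMap.range (LieAlgebra.ad ℂ g y) : Submodule ℂ g) : Set g) ∧
    (∃! P : g →ₗ[ℂ] g,
      (∀ u : g, ⁅x, u⁆ = 0 → P u = 0) ∧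
      LinearMap.range P ≤ LinearMap.range (LieAlgebra.ad ℂ g x) ∧
      ∀ u : g, ⁅x, u - ⁅y, P u⁆⁆ = 0) := by
  exact Sl2Proof.sl2_final x H y hHx hHy hxy
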